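/- Let G be a finite connected simple graph, let v_c be a vertex with ecc_G(v_c) = rad(G) (a center of G), and let T be a spanning tree of G such that d_T(v_c, v) = d_G(v_c, v) for every vertex v (a breadth-first tree rooted at v_c). Then rad(T) = rad(G); i.e., the breadth-first tree rooted at a center of G has the same radius (minimum graph eccentricity) as G. (This is the equality ε(I) = ε(G) in the paper's supplemental lemma.) -/
import Mathlib

open Finset

/-- The eccentricity of a vertex `v` in a finite graph `G`. -/
noncomputable def ecc {V : Type*} [Fintype V] (G : SimpleGraph V) (v : V) : ℕ :=
  Finset.univ.sup (fun u => G.dist v u)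

/-- The radius of a finite graph `G` on a nonempty vertex set. -/
noncomputable def rad {V : Type*} [Fintype V] [Nonempty V] (G : SimpleGraph V) : ℕ :=
  Finset.univ.inf' Finset.univ_nonempty (fun v => ecc G v)

lemma dist_mono {V : Type*} {G T : SimpleGraph V} (hle : T ≤ G) (hTc : T.Connected)
    (u v : V) : G.dist u v ≤ T.dist u v := by
  obtain ⟨p, hp⟩ := (hTc u v).exists_walk_length_eq_dist
  calc G.dist u v ≤ (p.mapLe hle).length := SimpleGraph.dist_le _
    _ = p.length := by simp [SimpleGraph.Walk.mapLe]
    _ = T.dist u v := hp.symm ▸ rfl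

/-- If `v_c` is a center of a finite connected simple graph `G` (a vertex of
minimum eccentricity) and `T` is a spanning tree of `G` preserving all distances
from `v_c` (a breadth-first tree rooted at `v_c`), then `rad T = rad G`. -/
theorem rad_bfs_tree_eq_rad {V : Type*} [Fintype V] [Nonempty V]
    (G T : SimpleGraph V) (hG : G.Connected) (hle : T ≤ G) (hT : T.IsTree) (v_c : V)
    (hcenter : ecc G v_c = rad G)
    (hdist : ∀ v : V, T.dist v_c v = G.dist v_c v) :
    rad T = rad G := by
  have hTc := hT.isConnected
  apply le_antisymm
  · calc rad T ≤ ecc T v_c := Finset.inf'_le _ (Finset.mem_univ _)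
      _ = ecc G v_c := by unfold ecc; exact Finset.sup_congr rfl (fun u _ => hdist u)
      _ = rad G := hcenter
  · apply Finset.le_inf'
    intro v _
    calc rad G ≤ ecc G v := Finset.inf'_le _ (Finset.mem_univ _)
      _ ≤ ecc T v := Finset.sup_mono_fun (fun u _ => dist_mono hle hTc v u)
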